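/- (Correctness of any output of the SRF-with-poles decoder.) Suppose (φ, ψ_1,…,ψ_ℓ) ∈ F_q[x]^{ℓ+1} is a nonzero solution of the key equations CRT_M((x−α_j)^{ϑ_j})·ψ_i ≡ φ·R_i mod M with deg φ < d_g + t and deg ψ_i < d_f + t. Let η = gcd(φ, ψ_1,…,ψ_ℓ), φ' = φ/η, ψ'_i = ψ_i/η, and assume deg η ≤ t, deg φ' < d_g, deg ψ'_i < d_f. Then the error locator Λ between Ev^∞(ψ'/φ') and R divides η, and hence d(Ev^∞(ψ'/φ'), R) = deg Λ ≤ t. -/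
import Mathlib


open Polynomial

/-- Correctness of any output of the SRF-with-poles decoder: if `(φ, ψ)` is a nonzero solution of
the key equations, `η = gcd(φ, ψ_1,…,ψ_ℓ)`, `φ' = φ/η`, `ψ'_i = ψ_i/η`, with `deg η ≤ t`,
`deg φ' < d_g`, `deg ψ'_i < d_f`, then the error locator `Λ` between `Ev^∞(ψ'/φ')` and the
received word divides `η`, and hence `d(Ev^∞(ψ'/φ'), R) = deg Λ ≤ t`. -/
theorem decoder_output_correct {F : Type*} [Field F] [Fintype F] [DecidableEq F]
    (n ℓ : ℕ) [NeZero ℓ]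
    (α : Fin n → F) (hα : Function.Injective α)
    (lam ϑ : Fin n → ℕ) (hlam : ∀ j, 0 < lam j) (hϑ : ∀ j, ϑ j ≤ lam j)
    (M : F[X]) (hM : M = ∏ j, (X - C (α j)) ^ lam j)
    (df dg t : ℕ) (hdf : 0 < df) (hdg : 0 < dg)
    -- the received reductions `r_{i,j}` (as lifts), reduced columns
    (r : Fin ℓ → Fin n → F[X])
    (hreduced : ∀ j, 0 < ϑ j → ∃ i, ¬ (X - C (α j)) ∣ r i j)
    -- `R i` is the CRT interpolant of row `i`
    (R : Fin ℓ → F[X]) (hR : ∀ i j, (X - C (α j)) ^ lam j ∣ (R i - r i j))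
    -- `T = CRT_M((x−α_j)^{ϑ_j})`
    (T : F[X]) (hT : ∀ j, (X - C (α j)) ^ lam j ∣ (T - (X - C (α j)) ^ ϑ j))
    -- a nonzero solution of the key equations
    (φ : F[X]) (ψ : Fin ℓ → F[X]) (hnz : φ ≠ 0 ∨ ∃ i, ψ i ≠ 0)
    (hkey : ∀ i, M ∣ (T * ψ i - φ * R i))
    (hdegφ : φ.degree < (dg + t : ℕ)) (hdegψ : ∀ i, (ψ i).degree < (df + t : ℕ))
    (η : F[X]) (hη : η = gcd φ (Finset.univ.gcd ψ))
    (hdegη : η.natDegree ≤ t)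
    (hdegφ' : (φ / η).degree < (dg : ℕ)) (hdegψ' : ∀ i, (ψ i / η).degree < (df : ℕ))
    -- `μ j` is the truncated valuation of the error column between `Ev^∞(ψ'/φ')` and `R`
    (μ : Fin n → ℕ)
    (hμ : ∀ j, μ j = min (lam j) (Finset.univ.inf' Finset.univ_nonempty
        (fun i => if (X - C (α j)) ^ ϑ j * (ψ i / η) - (φ / η) * r i j = 0 then lam j
          else rootMultiplicity (α j) ((X - C (α j)) ^ ϑ j * (ψ i / η) - (φ / η) * r i j))))
    (Λ : F[X]) (hΛ : Λ = ∏ j, (X - C (α j)) ^ (lam j - μ j)) :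
    Λ ∣ η ∧ Λ.natDegree ≤ t := by
  have hηne : η ≠ 0 := by
    rw [hη]
    intro h
    rw [gcd_eq_zero_iff] at h
    rcases hnz with h0 | ⟨i, hi⟩
    · exact h0 h.1
    · exact hi (Finset.gcd_eq_zero_iff.mp h.2 i (Finset.mem_univ i))
  have hφ : η * (φ / η) = φ :=
    EuclideanDomain.mul_div_cancel' hηne (by rw [hη]; exact gcd_dvd_left _ _)
  have hψ : ∀ i, η * (ψ i / η) = ψ i := fun i =>
    EuclideanDomain.mul_div_cancel' hηne
      (by rw [hη]; exact dvd_trans (gcd_dvd_right _ _) (Finset.gcd_dvd (Finset.mem_univ i)))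
  have hdvd : ∀ j i, (X - C (α j)) ^ lam j ∣
      η * ((X - C (α j)) ^ ϑ j * (ψ i / η) - (φ / η) * r i j) := by
    intro j i
    have hMj : (X - C (α j)) ^ lam j ∣ M :=
      hM ▸ Finset.dvd_prod_of_mem _ (Finset.mem_univ j)
    have h1 : (X - C (α j)) ^ lam j ∣ T * ψ i - φ * R i := dvd_trans hMj (hkey i)
    have h2 : (X - C (α j)) ^ lam j ∣ (T - (X - C (α j)) ^ ϑ j) * ψ i := (hT j).mul_right _
    have h3 : (X - C (α j)) ^ lam j ∣ φ * (R i - r i j) := (hR i j).mul_left φ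
    have key : η * ((X - C (α j)) ^ ϑ j * (ψ i / η) - (φ / η) * r i j)
        = (T * ψ i - φ * R i) - (T - (X - C (α j)) ^ ϑ j) * ψ i + φ * (R i - r i j) := by
      rw [mul_sub,
        show η * ((X - C (α j)) ^ ϑ j * (ψ i / η))
          = (X - C (α j)) ^ ϑ j * (η * (ψ i / η)) by ring, hψ i,
        show η * ((φ / η) * r i j) = (η * (φ / η)) * r i j by ring, hφ]
      ring
    rw [key]
    exact (h1.sub h2).add h3
  have hμv : ∀ j, lam j - μ j ≤ rootMultiplicity (α j) η := by
    intro j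
    have hle : lam j - rootMultiplicity (α j) η ≤ μ j := by
      rw [hμ j]
      refine le_min (Nat.sub_le _ _) (Finset.le_inf' _ _ ?_)
      intro i _
      by_cases he : (X - C (α j)) ^ ϑ j * (ψ i / η) - (φ / η) * r i j = 0
      · simp [he, Nat.sub_le]
      · rw [if_neg he]
        have hne : η * ((X - C (α j)) ^ ϑ j * (ψ i / η) - (φ / η) * r i j) ≠ 0 :=
          mul_ne_zero hηne he
        have hlam : lam j ≤ rootMultiplicity (α j)
            (η * ((X - C (α j)) ^ ϑ j * (ψ i / η) - (φ / η) * r i j)) :=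
          (le_rootMultiplicity_iff hne).mpr (hdvd j i)
        rw [rootMultiplicity_mul hne] at hlam
        omega
    omega
  have hjdvd : ∀ j ∈ Finset.univ, (X - C (α j)) ^ (lam j - μ j) ∣ η := by
    intro j _
    exact dvd_trans (pow_dvd_pow _ (hμv j)) (pow_rootMultiplicity_dvd η (α j))
  have hΛdvd : Λ ∣ η := by
    rw [hΛ]
    refine Finset.prod_dvd_of_coprime ?_ hjdvd
    intro a _ b _ hab
    exact ((pairwise_coprime_X_sub_C hα hab).pow)
  refine ⟨hΛdvd, ?_⟩
  exact le_trans (Polynomial.natDegree_le_of_dvd hΛdvd hηne) hdegη
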